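/- Let p be a prime, q = p^e, k = q-1, and let d be an integer with d ≡ 1 (mod p) such that d(k+1)/(2k+1-r) ∈ ℤ for all 0 ≤ r ≤ k. Then for 0 ≤ r ≤ k and 0 ≤ n ≤ r, the integer (d(k+1)/(2k+1-r))·C(2k+1-r, n)·C(k-n, r-n) is congruent to 1 mod p if r = k and n = 0, and congruent to 0 mod p otherwise. -/
import Mathlib


theorem stmt_7 (p : ℕ) (hp : p.Prime) (e : ℕ) (he : 1 ≤ e) (q : ℕ) (hq : q = p ^ e)
    (k : ℕ) (hk : k = q - 1) (d : ℤ) (hd : d ≡ 1 [ZMOD p])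
    (hdiv : ∀ r : ℕ, r ≤ k → (2 * (k : ℤ) + 1 - r) ∣ d * (k + 1)) :
    ∀ r : ℕ, r ≤ k → ∀ n : ℕ, n ≤ r → ∀ c : ℤ,
      (2 * (k : ℤ) + 1 - r) * c = d * (k + 1) →
        c * (Nat.choose (2 * k + 1 - r) n : ℤ) * (Nat.choose (k - n) (r - n) : ℤ)
          ≡ (if r = k ∧ n = 0 then 1 else 0) [ZMOD p] := by
  intro r hr n hn c hc
  have hppos : 0 < p := hp.pos
  have hp1 : 1 < p := hp.one_lt
  have hq1 : 1 ≤ q := by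
    rw [hq]; exact Nat.one_le_pow _ _ hppos
  have hk1 : k + 1 = q := by omega
  by_cases hrk : r = k
  · subst hrk
    -- here c = d
    have hc' : ((r:ℤ) + 1) * c = ((r:ℤ) + 1) * d := by linarith [hc]
    have hcd : c = d := by
      have hne : ((r:ℤ) + 1) ≠ 0 := by positivity
      exact mul_left_cancel₀ hne hc'
    have hMq : 2 * r + 1 - r = p ^ e := by omega
    rw [hMq]
    rcases Nat.eq_zero_or_pos n with hn0 | hn0
    · subst hn0
      simpa [hcd] using hd
    · have hdvd : p ∣ (p ^ e).choose n :=
        hp.dvd_choose_pow (by omega) (by omega)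
      obtain ⟨m, hm⟩ := hdvd
      rw [if_neg (by omega)]
      rw [hm]
      push_cast
      have : c * ((p:ℤ) * m) * ((r - n).choose (r - n) : ℤ)
          = (p:ℤ) * (c * m * ((r - n).choose (r - n) : ℤ)) := by ring
      rw [this]
      exact (Int.modEq_zero_iff_dvd).mpr ⟨_, rfl⟩
  · -- r < k, show p ∣ c
    have hrlt : r < k := lt_of_le_of_ne hr hrk
    set s := k - r with hs
    have hs0 : s ≠ 0 := by omega
    have hsq : s < q := by omega
    set t := s.factorization p with htdef
    have ht : p ^ t ∣ s := Nat.ordProj_dvd s p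
    have hte : t < e := by
      have h1 : p ^ t ≤ s := Nat.le_of_dvd (by omega) ht
      have h2 : p ^ t < p ^ e := by omega
      exact (Nat.pow_lt_pow_iff_right hp1).mp h2
    have hnd : ¬ p ^ (t + 1) ∣ s := Nat.pow_succ_factorization_not_dvd hs0 hp
    set M := 2 * k + 1 - r with hMdef
    have hM : M = q + s := by omega
    have hqt : p ^ t ∣ q := by rw [hq]; exact pow_dvd_pow p (le_of_lt hte)
    have hqt1 : p ^ (t + 1) ∣ q := by rw [hq]; exact pow_dvd_pow p hte
    obtain ⟨M', hM'⟩ : p ^ t ∣ M := by rw [hM]; exact dvd_add hqt ht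
    have hpM' : ¬ p ∣ M' := by
      intro hpd
      have : p ^ (t + 1) ∣ M := by
        rw [hM', pow_succ]
        exact mul_dvd_mul dvd_rfl hpd
      rw [hM] at this
      exact hnd ((Nat.dvd_add_right hqt1).mp this)
    have hMz : (M:ℤ) = 2 * (k:ℤ) + 1 - r := by omega
    have hc2 : ((p:ℤ) ^ t * (M':ℤ)) * c = d * ((p:ℤ) ^ t * (p:ℤ) ^ (e - t)) := by
      have h1 : (M:ℤ) * c = d * q := by
        rw [hMz, hc]; congr 1; omega
      have h2 : (M:ℤ) = (p:ℤ) ^ t * (M':ℤ) := by exact_mod_cast congrArg (Nat.cast : ℕ → ℤ) hM'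
      have h3 : ((q:ℕ):ℤ) = (p:ℤ) ^ t * (p:ℤ) ^ (e - t) := by
        rw [hq]; push_cast; rw [← pow_add]; congr 1; omega
      rw [← h2, h1, h3]
    have hc3 : (M':ℤ) * c = d * (p:ℤ) ^ (e - t) := by
      have hne : ((p:ℤ) ^ t) ≠ 0 := by positivity
      apply mul_left_cancel₀ hne
      rw [← mul_assoc, hc2]; ring
    have hpc : (p:ℤ) ∣ c := by
      have hpdvd : (p:ℤ) ∣ (M':ℤ) * c := by
        rw [hc3]
        exact Dvd.dvd.mul_left (dvd_pow_self _ (by omega)) d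
      have hip : Prime (p:ℤ) := Nat.prime_iff_prime_int.mp hp
      rcases hip.dvd_mul.mp hpdvd with h | h
      · exact absurd (Int.natCast_dvd_natCast.mp h) hpM'
      · exact h
    rw [if_neg (by simp [hrk])]
    obtain ⟨c', hc'⟩ := hpc
    rw [hc']
    have : (p:ℤ) * c' * ((2 * k + 1 - r).choose n : ℤ) * ((k - n).choose (r - n) : ℤ)
        = (p:ℤ) * (c' * ((2 * k + 1 - r).choose n : ℤ) * ((k - n).choose (r - n) : ℤ)) := by ring
    rw [this]
    exact (Int.modEq_zero_iff_dvd).mpr ⟨_, rfl⟩
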